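/- Let a(n,k) be defined by a(0,0)=1, a(0,k)=0 for k>0, a(n,-1)=0, and a(n,k) = a(n-1,k-1) + (2k+3)·a(n-1,k) + (k+2)²·a(n-1,k+1). Then a(n,k) equals the number of connected partial permutations of order n+1 with k+1 zero rows, and a(n,0) equals the number of connected permutations of {1,…,n+2}. -/

import Mathlib

namespace PP

def isPP {n : ℕ} (M : Fin n → Fin n → Bool) : Prop :=
  (∀ i j j', M i j = true → M i j' = true → j = j') ∧
  (∀ i i' j, M i j = true → M i' j = true → i = i')

def zeroRows {n : ℕ} (M : Fin n → Fin n → Bool) : ℕ :=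
  (Finset.univ.filter (fun i : Fin n => ∀ j, M i j = false)).card

def invStat {n : ℕ} (M : Fin n → Fin n → Bool) : ℕ :=
  (Finset.univ.filter (fun p : Fin n × Fin n =>
    M p.1 p.2 = false ∧ (∀ j' < p.2, M p.1 j' = false) ∧ (∀ i' < p.1, M i' p.2 = false) ∧
    ((∃ j', M p.1 j' = true) ∨ (∃ i', M i' p.2 = true)))).card

def rlminStat {n : ℕ} (M : Fin n → Fin n → Bool) : ℕ :=
  (Finset.univ.filter (fun p : Fin n × Fin n =>
    M p.1 p.2 = true ∧ ∀ l < p.2, ∃ i' < p.1, M i' l = true)).card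

def excStat {n : ℕ} (M : Fin n → Fin n → Bool) : ℕ :=
  (Finset.univ.filter (fun p : Fin n × Fin n => M p.1 p.2 = true ∧ p.1 < p.2)).card

def wexStat {n : ℕ} (M : Fin n → Fin n → Bool) : ℕ :=
  (Finset.univ.filter (fun p : Fin n × Fin n => M p.1 p.2 = true ∧ p.1 ≤ p.2)).card

def reachN {n : ℕ} (M : Fin n → Fin n → Bool) : ℕ → Fin n → Fin n → Prop
  | 0, i, j => i = j
  | m+1, i, j => ∃ l, M i l = true ∧ reachN M m l j

noncomputable def cycStat {n : ℕ} (M : Fin n → Fin n → Bool) : ℕ :=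
  Nat.card {i : Fin n // (∃ m, 0 < m ∧ reachN M m i i) ∧ ∀ j, (∃ m, reachN M m i j) → j ≤ i}

def fixStat {n : ℕ} (M : Fin n → Fin n → Bool) : ℕ :=
  (Finset.univ.filter (fun i : Fin n => M i i = true)).card

noncomputable def cycGe2Stat {n : ℕ} (M : Fin n → Fin n → Bool) : ℕ :=
  Nat.card {i : Fin n // (∃ m, 0 < m ∧ reachN M m i i) ∧ (∀ j, (∃ m, reachN M m i j) → j ≤ i) ∧ M i i = false}

def Conn {n : ℕ} (M : Fin n → Fin n → Bool) : Prop :=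
  ∀ i : ℕ, 0 < i → i < n → ∃ r : Fin n, r.1 < i ∧ ∀ c : Fin n, c.1 < i → M r c = false

def UpDownFrom {n : ℕ} (M : Fin n → Fin n → Bool) (i : Fin n) : Prop :=
  ∀ (m : ℕ) (a b : Fin n),
    (∀ m', 1 ≤ m' → m' ≤ m + 1 → ¬ reachN M m' i i) →
    reachN M m i a → M a b = true →
    ((Even m → a < b) ∧ (¬ Even m → b < a))

def CUD {n : ℕ} (M : Fin n → Fin n → Bool) : Prop :=
  (∀ i : Fin n,
      ((∃ m, 0 < m ∧ reachN M m i i) ∧ ∀ j, (∃ m, reachN M m i j) → i ≤ j) →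
      UpDownFrom M i) ∧
  (∀ i : Fin n, (∀ i', M i' i = false) → UpDownFrom M i)

def desStat {n : ℕ} (M : Fin n → Fin n → Bool) : ℕ :=
  (Finset.univ.filter (fun p : Fin n × Fin n =>
      M p.1 p.2 = true ∧ ∃ h : p.1.1 + 1 < n, ∃ b : Fin n, M ⟨p.1.1 + 1, h⟩ b = true ∧ b < p.2)).card
  + (Finset.univ.filter (fun p : Fin n =>
      (∀ j, M p j = false) ∧ ∃ _h : 0 < p.1, ∃ a j : Fin n,
        M ⟨p.1 - 1, Nat.lt_of_le_of_lt (Nat.sub_le _ _) p.isLt⟩ a = true ∧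
        (∀ i, M i j = false) ∧
        (Finset.univ.filter (fun m : Fin n => (∀ i, M i m = false) ∧ m < j)).card
          = (Finset.univ.filter (fun r : Fin n => (∀ c, M r c = false) ∧ r < p)).card ∧
        j < a)).card

def gbinom {R : Type*} [CommRing R] (q : R) : ℕ → ℕ → R
  | _, 0 => 1
  | 0, _+1 => 0
  | n+1, k+1 => gbinom q n k + q ^ (k+1) * gbinom q n (k+1)

end PP

namespace StmtAux
open Finset PP
open scoped Classical
abbrev Mat (m : ℕ) := Fin m → Fin m → Bool
def ZR {m : ℕ} (M : Mat m) (i : Fin m) : Prop := ∀ j, M i j = false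
def ZC {m : ℕ} (M : Mat m) (j : Fin m) : Prop := ∀ i, M i j = false
def P {m : ℕ} (j : ℕ) (M : Mat m) : Prop := isPP M ∧ zeroRows M = j ∧ Conn M
noncomputable def N (m j : ℕ) : ℕ := Nat.card {M : Mat m // P j M}
variable {m : ℕ}
noncomputable def ext (M : Mat m) (r c : Option (Fin m)) (b : Bool) : Mat (m+1) :=
  fun i j =>
    if hi : i.1 < m then
      if hj : j.1 < m then M ⟨i.1, hi⟩ ⟨j.1, hj⟩ else decide (r = some ⟨i.1, hi⟩)
    else
      if hj : j.1 < m then decide (c = some ⟨j.1, hj⟩) else b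
variable {M : Mat m} {r c : Option (Fin m)} {b : Bool}
lemma ext_cast (i j : Fin m) : ext M r c b i.castSucc j.castSucc = M i j := by
  simp [ext, i.isLt, j.isLt]
lemma ext_col_last (i : Fin m) :
    ext M r c b i.castSucc (Fin.last m) = decide (r = some i) := by
  simp [ext, i.isLt]
lemma ext_row_last (j : Fin m) :
    ext M r c b (Fin.last m) j.castSucc = decide (c = some j) := by
  simp [ext, j.isLt]
lemma ext_corner : ext M r c b (Fin.last m) (Fin.last m) = b := by
  simp [ext]

lemma isPP_ext (hM : isPP M) (hr : ∀ i, r = some i → ZR M i)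
    (hc : ∀ jc, c = some jc → ZC M jc) (hb : b = true → r = none ∧ c = none) :
    isPP (ext M r c b) := by
  constructor
  · intro i j j' h1 h2
    induction i using Fin.lastCases with
    | last =>
      induction j using Fin.lastCases with
      | last =>
        induction j' using Fin.lastCases with
        | last => rfl
        | cast j' =>
          rw [ext_corner] at h1; rw [ext_row_last] at h2
          obtain ⟨-, hcn⟩ := hb h1
          simp [hcn] at h2
      | cast j =>
        rw [ext_row_last] at h1
        simp only [decide_eq_true_eq] at h1
        induction j' using Fin.lastCases with
        | last =>
          rw [ext_corner] at h2
          obtain ⟨-, hcn⟩ := hb h2; simp [hcn] at h1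
        | cast j' =>
          rw [ext_row_last] at h2
          simp only [decide_eq_true_eq] at h2
          rw [h1] at h2; simpa using h2
    | cast i =>
      induction j using Fin.lastCases with
      | last =>
        rw [ext_col_last] at h1
        simp only [decide_eq_true_eq] at h1
        induction j' using Fin.lastCases with
        | last => rfl
        | cast j' =>
          rw [ext_cast] at h2
          have := hr i h1 j'
          simp [this] at h2
      | cast j =>
        rw [ext_cast] at h1
        induction j' using Fin.lastCases with
        | last =>
          rw [ext_col_last] at h2
          simp only [decide_eq_true_eq] at h2
          have := hr i h2 j
          simp [this] at h1
        | cast j' =>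
          rw [ext_cast] at h2
          exact congrArg Fin.castSucc (hM.1 i j j' h1 h2)
  · intro i i' j h1 h2
    induction j using Fin.lastCases with
    | last =>
      induction i using Fin.lastCases with
      | last =>
        induction i' using Fin.lastCases with
        | last => rfl
        | cast i' =>
          rw [ext_corner] at h1; rw [ext_col_last] at h2
          obtain ⟨hrn, -⟩ := hb h1; simp [hrn] at h2
      | cast i =>
        rw [ext_col_last] at h1
        simp only [decide_eq_true_eq] at h1
        induction i' using Fin.lastCases with
        | last =>
          rw [ext_corner] at h2
          obtain ⟨hrn, -⟩ := hb h2; simp [hrn] at h1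
        | cast i' =>
          rw [ext_col_last] at h2
          simp only [decide_eq_true_eq] at h2
          rw [h1] at h2; simpa using h2
    | cast j =>
      induction i using Fin.lastCases with
      | last =>
        rw [ext_row_last] at h1
        simp only [decide_eq_true_eq] at h1
        induction i' using Fin.lastCases with
        | last => rfl
        | cast i' =>
          rw [ext_cast] at h2
          have := hc j h1 i'
          simp [this] at h2
      | cast i =>
        rw [ext_cast] at h1
        induction i' using Fin.lastCases with
        | last =>
          rw [ext_row_last] at h2
          simp only [decide_eq_true_eq] at h2
          have := hc j h2 i
          simp [this] at h1
        | cast i' =>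
          rw [ext_cast] at h2
          exact congrArg Fin.castSucc (hM.2 i i' j h1 h2)


lemma zr_ext_cast (i : Fin m) :
    ZR (ext M r c b) i.castSucc ↔ ZR M i ∧ r ≠ some i := by
  constructor
  · intro h
    refine ⟨fun j => by simpa [ext_cast] using h j.castSucc, fun hri => ?_⟩
    have := h (Fin.last m)
    rw [ext_col_last] at this
    simp [hri] at this
  · rintro ⟨hz, hri⟩ j
    induction j using Fin.lastCases with
    | last => rw [ext_col_last]; simpa using hri
    | cast j => rw [ext_cast]; exact hz j

lemma zr_ext_last : ZR (ext M r c b) (Fin.last m) ↔ c = none ∧ b = false := by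
  constructor
  · intro h
    constructor
    · cases hc : c with
      | none => rfl
      | some jc =>
        have := h jc.castSucc
        rw [ext_row_last] at this
        simp [hc] at this
    · have := h (Fin.last m); rwa [ext_corner] at this
  · rintro ⟨hc, hb⟩ j
    induction j using Fin.lastCases with
    | last => rw [ext_corner]; exact hb
    | cast j => rw [ext_row_last]; simp [hc]

lemma zeroRows_ext :
    zeroRows (ext M r c b)
      = (univ.filter (fun i : Fin m => ZR M i ∧ r ≠ some i)).card
        + (if c = none ∧ b = false then 1 else 0) := by
  unfold zeroRows
  rw [Finset.card_filter, Finset.card_filter, Fin.sum_univ_castSucc]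
  congr 1
  · apply Finset.sum_congr rfl
    intro i _
    congr 1
    have h2 : (∀ j, ext M r c b i.castSucc j = false) ↔ (ZR M i ∧ r ≠ some i) :=
      zr_ext_cast i
    simp only [h2]
  · have h2 : (∀ j, ext M r c b (Fin.last m) j = false) ↔ (c = none ∧ b = false) :=
      zr_ext_last
    simp only [h2]

lemma conn_ext (hm : 0 < m) :
    Conn (ext M r c b) ↔ Conn M ∧ ∃ i, ZR M i := by
  constructor
  · intro h
    constructor
    · intro i hi him
      obtain ⟨rr, hrr, hrow⟩ := h i hi (him.trans (Nat.lt_succ_self m))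
      have hrm : rr.1 < m := hrr.trans him
      refine ⟨⟨rr.1, hrm⟩, hrr, fun cc hcc => ?_⟩
      have := hrow cc.castSucc (by simpa using hcc)
      have hrw : rr = (⟨rr.1, hrm⟩ : Fin m).castSucc := by ext; rfl
      rw [hrw, ext_cast] at this
      exact this
    · obtain ⟨rr, hrr, hrow⟩ := h m hm (Nat.lt_succ_self m)
      refine ⟨⟨rr.1, hrr⟩, fun j => ?_⟩
      have := hrow j.castSucc (by simpa using j.isLt)
      have hrw : rr = (⟨rr.1, hrr⟩ : Fin m).castSucc := by ext; rfl
      rw [hrw, ext_cast] at this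
      exact this
  · rintro ⟨hconn, i0, hi0⟩ i hi him
    rcases Nat.lt_or_ge i m with hlt | hge
    · obtain ⟨rr, hrr, hrow⟩ := hconn i hi hlt
      refine ⟨rr.castSucc, by simpa using hrr, fun cc hcc => ?_⟩
      have hcm : cc.1 < m := hcc.trans hlt
      have hrw : cc = (⟨cc.1, hcm⟩ : Fin m).castSucc := by ext; rfl
      rw [hrw, ext_cast]
      exact hrow _ hcc
    · have him' : i = m := le_antisymm (Nat.lt_succ_iff.mp him) hge
      refine ⟨i0.castSucc, by simpa [him'] using i0.isLt, fun cc hcc => ?_⟩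
      have hcm : cc.1 < m := by omega
      have hrw : cc = (⟨cc.1, hcm⟩ : Fin m).castSucc := by ext; rfl
      rw [hrw, ext_cast]
      exact hi0 _

lemma option_eq_of_iff {r r' : Option (Fin m)} (h : ∀ i, r = some i ↔ r' = some i) :
    r = r' := by
  cases r with
  | none => cases r' with
    | none => rfl
    | some a => exact ((h a).mpr rfl)
  | some a => exact ((h a).mp rfl).symm

lemma ext_inj {M' : Mat m} {r' c' : Option (Fin m)} {b' : Bool}
    (h : ext M r c b = ext M' r' c' b') : M = M' ∧ r = r' ∧ c = c' ∧ b = b' := by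
  refine ⟨funext fun i => funext fun j => ?_, ?_, ?_, ?_⟩
  · have := congrFun (congrFun h i.castSucc) j.castSucc
    rwa [ext_cast, ext_cast] at this
  · apply option_eq_of_iff
    intro i
    have := congrFun (congrFun h i.castSucc) (Fin.last m)
    rw [ext_col_last, ext_col_last] at this
    constructor <;> intro hh <;> simp [hh] at this ⊢ <;> first | exact this | exact this.symm
  · apply option_eq_of_iff
    intro j
    have := congrFun (congrFun h (Fin.last m)) j.castSucc
    rw [ext_row_last, ext_row_last] at this
    constructor <;> intro hh <;> simp [hh] at this ⊢ <;> first | exact this | exact this.symm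
  · have := congrFun (congrFun h (Fin.last m)) (Fin.last m)
    rwa [ext_corner, ext_corner] at this

lemma exists_ext (M' : Mat (m+1)) (hM' : isPP M') :
    ∃ (M : Mat m) (r c : Option (Fin m)) (b : Bool), M' = ext M r c b ∧
      (∀ i, r = some i → ZR M i) ∧ (∀ jc, c = some jc → ZC M jc) ∧
      (b = true → r = none ∧ c = none) := by
  classical
  set M : Mat m := fun i j => M' i.castSucc j.castSucc with hMdef
  set b : Bool := M' (Fin.last m) (Fin.last m) with hbdef
  set r : Option (Fin m) :=
    if h : ∃ i : Fin m, M' i.castSucc (Fin.last m) = true then some h.choose else none with hrdef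
  set c : Option (Fin m) :=
    if h : ∃ jc : Fin m, M' (Fin.last m) jc.castSucc = true then some h.choose else none
    with hcdef
  have hrif : ∀ i, r = some i ↔ M' i.castSucc (Fin.last m) = true := by
    intro i
    rw [hrdef]
    by_cases h : ∃ i : Fin m, M' i.castSucc (Fin.last m) = true
    · rw [dif_pos h]
      constructor
      · intro hh
        obtain rfl : h.choose = i := by injection hh
        exact h.choose_spec
      · intro hh
        exact congrArg some (Fin.castSucc_injective m (hM'.2 _ _ _ h.choose_spec hh))
    · rw [dif_neg h]
      simp only [reduceCtorEq, false_iff]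
      intro hh
      exact h ⟨i, hh⟩
  have hcif : ∀ jc, c = some jc ↔ M' (Fin.last m) jc.castSucc = true := by
    intro jc
    rw [hcdef]
    by_cases h : ∃ jc : Fin m, M' (Fin.last m) jc.castSucc = true
    · rw [dif_pos h]
      constructor
      · intro hh
        obtain rfl : h.choose = jc := by injection hh
        exact h.choose_spec
      · intro hh
        exact congrArg some (Fin.castSucc_injective m (hM'.1 _ _ _ h.choose_spec hh))
    · rw [dif_neg h]
      simp only [reduceCtorEq, false_iff]
      intro hh
      exact h ⟨jc, hh⟩
  have hb2 : b = true → M' (Fin.last m) (Fin.last m) = true := by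
    intro hb1; rw [← hbdef]; exact hb1
  refine ⟨M, r, c, b, ?_, ?_, ?_, ?_⟩
  · funext i j
    induction i using Fin.lastCases with
    | last =>
      induction j using Fin.lastCases with
      | last => rw [ext_corner]
      | cast j =>
        rw [ext_row_last]
        cases hv : M' (Fin.last m) j.castSucc with
        | true => simp [(hcif j).mpr hv]
        | false =>
          have hne : c ≠ some j := fun hh => by rw [(hcif j).mp hh] at hv; cases hv
          simp [hne]
    | cast i =>
      induction j using Fin.lastCases with
      | last =>
        rw [ext_col_last]
        cases hv : M' i.castSucc (Fin.last m) with
        | true => simp [(hrif i).mpr hv]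
        | false =>
          have hne : r ≠ some i := fun hh => by rw [(hrif i).mp hh] at hv; cases hv
          simp [hne]
      | cast j => rw [ext_cast]
  · intro i hsome j
    have hi1 := (hrif i).mp hsome
    by_contra hcon
    have hv : M' i.castSucc j.castSucc = true := by
      cases hv : M' i.castSucc j.castSucc
      · exact absurd hv hcon
      · rfl
    have h2 := hM'.1 _ _ _ hi1 hv
    have h3 := congrArg Fin.val h2
    have hj := j.isLt
    simp at h3
    omega
  · intro jc hsome i
    have hj1 := (hcif jc).mp hsome
    by_contra hcon
    have hv : M' i.castSucc jc.castSucc = true := by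
      cases hv : M' i.castSucc jc.castSucc
      · exact absurd hv hcon
      · rfl
    have h2 := hM'.2 _ _ _ hj1 hv
    have h3 := congrArg Fin.val h2
    have hi := i.isLt
    simp at h3
    omega
  · intro hb1
    constructor
    · cases hro : r with
      | none => rfl
      | some i =>
        have h2 := hM'.2 _ _ _ ((hrif i).mp hro) (hb2 hb1)
        have h3 := congrArg Fin.val h2
        have hi := i.isLt
        simp at h3
        omega
    · cases hco : c with
      | none => rfl
      | some jc =>
        have h2 := hM'.1 _ _ _ ((hcif jc).mp hco) (hb2 hb1)
        have h3 := congrArg Fin.val h2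
        have hj := jc.isLt
        simp at h3
        omega


lemma zeroCols_card (hM : isPP M) :
    (univ.filter (fun j : Fin m => ZC M j)).card = zeroRows M := by
  have key : (univ.filter (fun i : Fin m => ¬ ZR M i)).card
      = (univ.filter (fun j : Fin m => ¬ ZC M j)).card := by
    have h1 : (univ.filter (fun p : Fin m × Fin m => M p.1 p.2 = true)).card
        = (univ.filter (fun i : Fin m => ¬ ZR M i)).card := by
      apply Finset.card_bij (fun p _ => p.1)
      · intro p hp
        simp only [mem_filter, mem_univ, true_and] at hp ⊢
        intro hz
        rw [hz p.2] at hp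
        cases hp
      · intro p hp q hq hpq
        simp only [mem_filter, mem_univ, true_and] at hp hq
        have : p.2 = q.2 := hM.1 p.1 p.2 q.2 hp (by rw [hpq]; exact hq)
        exact Prod.ext hpq this
      · intro i hi
        simp only [mem_filter, mem_univ, true_and, ZR] at hi
        push_neg at hi
        obtain ⟨j, hj⟩ : ∃ j, M i j ≠ false := by simpa using hi
        have hj' : M i j = true := by
          cases h : M i j
          · exact absurd h hj
          · rfl
        exact ⟨(i, j), by simp [hj'], rfl⟩
    have h2 : (univ.filter (fun p : Fin m × Fin m => M p.1 p.2 = true)).card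
        = (univ.filter (fun j : Fin m => ¬ ZC M j)).card := by
      apply Finset.card_bij (fun p _ => p.2)
      · intro p hp
        simp only [mem_filter, mem_univ, true_and] at hp ⊢
        intro hz
        rw [hz p.1] at hp
        cases hp
      · intro p hp q hq hpq
        simp only [mem_filter, mem_univ, true_and] at hp hq
        have : p.1 = q.1 := hM.2 p.1 q.1 p.2 hp (by rw [hpq]; exact hq)
        exact Prod.ext this hpq
      · intro j hj
        simp only [mem_filter, mem_univ, true_and, ZC] at hj
        push_neg at hj
        obtain ⟨i, hi⟩ : ∃ i, M i j ≠ false := by simpa using hj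
        exact ⟨(i, j), by simp [hi], rfl⟩
    rw [← h1, h2]
  have hr := Finset.card_filter_add_card_filter_not
    (s := (univ : Finset (Fin m))) (p := fun i => ZR M i)
  have hc := Finset.card_filter_add_card_filter_not
    (s := (univ : Finset (Fin m))) (p := fun j => ZC M j)
  have hz : zeroRows M = (univ.filter (fun i : Fin m => ZR M i)).card := by
    unfold zeroRows
    congr 1
    apply Finset.filter_congr
    intro i _
    simp [ZR]
  rw [hz]
  omega

lemma card_zr_subtype (M : Mat m) :
    Nat.card {i : Fin m // ZR M i} = zeroRows M := by
  rw [Nat.card_eq_fintype_card, Fintype.card_subtype]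
  unfold zeroRows
  congr 1
  apply Finset.filter_congr
  intro i _
  simp [ZR]

lemma card_zc_subtype (hM : isPP M) :
    Nat.card {j : Fin m // ZC M j} = zeroRows M := by
  rw [Nat.card_eq_fintype_card, Fintype.card_subtype]
  rw [← zeroCols_card hM]

lemma zeroRows_eq_filter (M : Mat m) :
    zeroRows M = (univ.filter (fun i : Fin m => ZR M i)).card := by
  unfold zeroRows
  congr 1
  apply Finset.filter_congr
  intro i _
  simp [ZR]

lemma pos_of_zr {i : Fin m} (hi : ZR M i) : 0 < zeroRows M := by
  rw [zeroRows_eq_filter]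
  exact Finset.card_pos.mpr ⟨i, by simp [hi]⟩

lemma exists_zr_of_pos (h : 0 < zeroRows M) : ∃ i, ZR M i := by
  rw [zeroRows_eq_filter] at h
  obtain ⟨i, hi⟩ := Finset.card_pos.mp h
  exact ⟨i, (Finset.mem_filter.mp hi).2⟩

lemma pos_of_zc (hM : isPP M) {jc : Fin m} (hjc : ZC M jc) : 0 < zeroRows M := by
  rw [← zeroCols_card hM]
  exact Finset.card_pos.mpr ⟨jc, by simp [hjc]⟩

lemma filter_none_card :
    (univ.filter (fun i' : Fin m => ZR M i' ∧ (none : Option (Fin m)) ≠ some i')).card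
      = zeroRows M := by
  rw [zeroRows_eq_filter]
  congr 1
  apply Finset.filter_congr
  intro i _
  simp

lemma filter_some_card {i : Fin m} (hi : ZR M i) :
    (univ.filter (fun i' : Fin m => ZR M i' ∧ (some i : Option (Fin m)) ≠ some i')).card
      = zeroRows M - 1 := by
  have he : (univ.filter (fun i' : Fin m => ZR M i' ∧ (some i : Option (Fin m)) ≠ some i'))
      = (univ.filter (fun i' : Fin m => ZR M i')).erase i := by
    ext i'
    simp only [Finset.mem_filter, Finset.mem_erase, Finset.mem_univ, true_and]
    constructor
    · rintro ⟨h1, h2⟩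
      exact ⟨fun hh => h2 (by rw [hh]), h1⟩
    · rintro ⟨h1, h2⟩
      exact ⟨h2, fun hh => h1 (by injection hh.symm)⟩
  rw [he, Finset.card_erase_of_mem (by simp [hi]), ← zeroRows_eq_filter]

lemma zr_aa : zeroRows (ext M none none true) = zeroRows M := by
  rw [zeroRows_ext, filter_none_card]
  simp

lemma zr_bb : zeroRows (ext M none none false) = zeroRows M + 1 := by
  rw [zeroRows_ext, filter_none_card]
  simp

lemma zr_cc {i : Fin m} (hi : ZR M i) :
    zeroRows (ext M (some i) none false) = zeroRows M := by
  rw [zeroRows_ext, filter_some_card hi]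
  have := pos_of_zr hi
  simp
  omega

lemma zr_dd {jc : Fin m} : zeroRows (ext M none (some jc) false) = zeroRows M := by
  rw [zeroRows_ext, filter_none_card]
  simp

lemma zr_ee {i jc : Fin m} (hi : ZR M i) :
    zeroRows (ext M (some i) (some jc) false) = zeroRows M - 1 := by
  rw [zeroRows_ext, filter_some_card hi]
  simp

lemma isPP_of_ext (h : isPP (ext M r c b)) : isPP M := by
  constructor
  · intro i j j' h1 h2
    have := h.1 i.castSucc j.castSucc j'.castSucc (by rwa [ext_cast]) (by rwa [ext_cast])
    exact Fin.castSucc_injective m this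
  · intro i i' j h1 h2
    have := h.2 i.castSucc i'.castSucc j.castSucc (by rwa [ext_cast]) (by rwa [ext_cast])
    exact Fin.castSucc_injective m this

lemma nosome_r : (∀ i : Fin m, (none : Option (Fin m)) = some i → ZR M i) := by
  intro i h; cases h

lemma nosome_c : (∀ jc : Fin m, (none : Option (Fin m)) = some jc → ZC M jc) := by
  intro jc h; cases h

lemma caseA (hm : 0 < m) (hM : P j M) (hj : 1 ≤ j) : P j (ext M none none true) := by
  obtain ⟨h1, h2, h3⟩ := hM
  refine ⟨isPP_ext h1 nosome_r nosome_c (fun _ => ⟨rfl, rfl⟩), ?_, ?_⟩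
  · rw [zr_aa, h2]
  · rw [conn_ext hm]
    exact ⟨h3, exists_zr_of_pos (by omega)⟩

lemma caseB (hm : 0 < m) (hM : P (j-1) M) (hj : 2 ≤ j) : P j (ext M none none false) := by
  obtain ⟨h1, h2, h3⟩ := hM
  refine ⟨isPP_ext h1 nosome_r nosome_c (by simp), ?_, ?_⟩
  · rw [zr_bb, h2]; omega
  · rw [conn_ext hm]
    exact ⟨h3, exists_zr_of_pos (by omega)⟩

lemma caseC (hm : 0 < m) {i : Fin m} (hM : P j M) (hi : ZR M i) : P j (ext M (some i) none false) := by
  obtain ⟨h1, h2, h3⟩ := hM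
  refine ⟨isPP_ext h1 (fun i' h => by injection h with h; exact h ▸ hi) nosome_c (by simp),
    ?_, ?_⟩
  · rw [zr_cc hi, h2]
  · rw [conn_ext hm]
    exact ⟨h3, ⟨i, hi⟩⟩

lemma caseD (hm : 0 < m) {jc : Fin m} (hM : P j M) (hjc : ZC M jc) : P j (ext M none (some jc) false) := by
  obtain ⟨h1, h2, h3⟩ := hM
  refine ⟨isPP_ext h1 nosome_r (fun jc' h => by injection h with h; exact h ▸ hjc) (by simp),
    ?_, ?_⟩
  · rw [zr_dd, h2]
  · rw [conn_ext hm]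
    exact ⟨h3, exists_zr_of_pos (pos_of_zc h1 hjc)⟩

lemma caseE (hm : 0 < m) {i jc : Fin m} (hM : P (j+1) M) (hi : ZR M i) (hjc : ZC M jc) :
    P j (ext M (some i) (some jc) false) := by
  obtain ⟨h1, h2, h3⟩ := hM
  refine ⟨isPP_ext h1 (fun i' h => by injection h with h; exact h ▸ hi)
    (fun jc' h => by injection h with h; exact h ▸ hjc) (by simp), ?_, ?_⟩
  · rw [zr_ee hi, h2]; omega
  · rw [conn_ext hm]
    exact ⟨h3, ⟨i, hi⟩⟩

lemma card_P_and (j : ℕ) (Q : Prop) :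
    Nat.card {M : Mat m // P j M ∧ Q} = if Q then N m j else 0 := by
  split
  next hq =>
    exact Nat.card_congr (Equiv.subtypeEquivRight (fun M => by simp [hq]))
  next hq =>
    have : IsEmpty {M : Mat m // P j M ∧ Q} := ⟨fun x => hq x.2.2⟩
    exact Nat.card_of_isEmpty

lemma card_pair_r (j : ℕ) :
    Nat.card {x : Mat m × Fin m // P j x.1 ∧ ZR x.1 x.2} = j * N m j := by
  have e : {x : Mat m × Fin m // P j x.1 ∧ ZR x.1 x.2}
      ≃ Σ M : {M : Mat m // P j M}, {i : Fin m // ZR M.1 i} :=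
    { toFun := fun x => ⟨⟨x.1.1, x.2.1⟩, ⟨x.1.2, x.2.2⟩⟩
      invFun := fun y => ⟨(y.1.1, y.2.1), ⟨y.1.2, y.2.2⟩⟩
      left_inv := fun x => rfl
      right_inv := fun y => rfl }
  rw [Nat.card_congr e]
  haveI : Fintype {M : Mat m // P j M} := Fintype.ofFinite _
  rw [Nat.card_eq_fintype_card, Fintype.card_sigma]
  have hf : ∀ M : {M : Mat m // P j M}, Fintype.card {i : Fin m // ZR M.1 i} = j := by
    intro M
    rw [← Nat.card_eq_fintype_card, card_zr_subtype, M.2.2.1]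
  rw [Finset.sum_congr rfl (fun M _ => hf M), Finset.sum_const, smul_eq_mul]
  rw [show N m j = Fintype.card {M : Mat m // P j M} from Nat.card_eq_fintype_card]
  rw [Finset.card_univ, mul_comm]

lemma card_pair_c (j : ℕ) :
    Nat.card {x : Mat m × Fin m // P j x.1 ∧ ZC x.1 x.2} = j * N m j := by
  have e : {x : Mat m × Fin m // P j x.1 ∧ ZC x.1 x.2}
      ≃ Σ M : {M : Mat m // P j M}, {jc : Fin m // ZC M.1 jc} :=
    { toFun := fun x => ⟨⟨x.1.1, x.2.1⟩, ⟨x.1.2, x.2.2⟩⟩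
      invFun := fun y => ⟨(y.1.1, y.2.1), ⟨y.1.2, y.2.2⟩⟩
      left_inv := fun x => rfl
      right_inv := fun y => rfl }
  rw [Nat.card_congr e]
  haveI : Fintype {M : Mat m // P j M} := Fintype.ofFinite _
  rw [Nat.card_eq_fintype_card, Fintype.card_sigma]
  have hf : ∀ M : {M : Mat m // P j M}, Fintype.card {jc : Fin m // ZC M.1 jc} = j := by
    intro M
    rw [← Nat.card_eq_fintype_card, card_zc_subtype M.2.1, M.2.2.1]
  rw [Finset.sum_congr rfl (fun M _ => hf M), Finset.sum_const, smul_eq_mul]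
  rw [show N m j = Fintype.card {M : Mat m // P j M} from Nat.card_eq_fintype_card]
  rw [Finset.card_univ, mul_comm]

lemma card_trip (j : ℕ) :
    Nat.card {x : Mat m × Fin m × Fin m // P j x.1 ∧ ZR x.1 x.2.1 ∧ ZC x.1 x.2.2}
      = j * j * N m j := by
  have e : {x : Mat m × Fin m × Fin m // P j x.1 ∧ ZR x.1 x.2.1 ∧ ZC x.1 x.2.2}
      ≃ Σ M : {M : Mat m // P j M}, ({i : Fin m // ZR M.1 i} × {jc : Fin m // ZC M.1 jc}) :=
    { toFun := fun x => ⟨⟨x.1.1, x.2.1⟩, ⟨x.1.2.1, x.2.2.1⟩, ⟨x.1.2.2, x.2.2.2⟩⟩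
      invFun := fun y => ⟨(y.1.1, y.2.1.1, y.2.2.1), y.1.2, y.2.1.2, y.2.2.2⟩
      left_inv := fun x => rfl
      right_inv := fun y => rfl }
  rw [Nat.card_congr e]
  haveI : Fintype {M : Mat m // P j M} := Fintype.ofFinite _
  rw [Nat.card_eq_fintype_card, Fintype.card_sigma]
  have hf : ∀ M : {M : Mat m // P j M},
      Fintype.card ({i : Fin m // ZR M.1 i} × {jc : Fin m // ZC M.1 jc}) = j * j := by
    intro M
    rw [Fintype.card_prod, ← Nat.card_eq_fintype_card, ← Nat.card_eq_fintype_card,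
      card_zr_subtype, card_zc_subtype M.2.1, M.2.2.1]
  rw [Finset.sum_congr rfl (fun M _ => hf M), Finset.sum_const, smul_eq_mul]
  rw [show N m j = Fintype.card {M : Mat m // P j M} from Nat.card_eq_fintype_card]
  rw [Finset.card_univ]
  ring

lemma master (hm : 0 < m) (j : ℕ) :
    N (m+1) j = (if 1 ≤ j then N m j else 0) + (if 2 ≤ j then N m (j-1) else 0)
      + j * N m j + j * N m j + (j+1) * (j+1) * N m (j+1) := by
  classical
  let F : {M : Mat m // P j M ∧ 1 ≤ j} ⊕ {M : Mat m // P (j-1) M ∧ 2 ≤ j}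
      ⊕ {x : Mat m × Fin m // P j x.1 ∧ ZR x.1 x.2}
      ⊕ {x : Mat m × Fin m // P j x.1 ∧ ZC x.1 x.2}
      ⊕ {x : Mat m × Fin m × Fin m // P (j+1) x.1 ∧ ZR x.1 x.2.1 ∧ ZC x.1 x.2.2}
      → {M' : Mat (m+1) // P j M'} := fun x =>
    match x with
    | Sum.inl a => ⟨ext a.1 none none true, caseA hm a.2.1 a.2.2⟩
    | Sum.inr (Sum.inl bb) => ⟨ext bb.1 none none false, caseB hm bb.2.1 bb.2.2⟩
    | Sum.inr (Sum.inr (Sum.inl cc)) =>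
        ⟨ext cc.1.1 (some cc.1.2) none false, caseC hm cc.2.1 cc.2.2⟩
    | Sum.inr (Sum.inr (Sum.inr (Sum.inl dd))) =>
        ⟨ext dd.1.1 none (some dd.1.2) false, caseD hm dd.2.1 dd.2.2⟩
    | Sum.inr (Sum.inr (Sum.inr (Sum.inr ee))) =>
        ⟨ext ee.1.1 (some ee.1.2.1) (some ee.1.2.2) false,
          caseE hm ee.2.1 ee.2.2.1 ee.2.2.2⟩
  have hbij : Function.Bijective F := by
    constructor
    · intro x y hxy
      have hxy' := congrArg Subtype.val hxy
      rcases x with a | bb | cc | dd | ee <;> rcases y with a' | bb' | cc' | dd' | ee' <;>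
        obtain ⟨h1, h2, h3, h4⟩ := ext_inj hxy' <;>
        first
          | exact congrArg Sum.inl (Subtype.ext h1)
          | exact congrArg (fun z => Sum.inr (Sum.inl z)) (Subtype.ext h1)
          | exact congrArg (fun z => Sum.inr (Sum.inr (Sum.inl z)))
              (Subtype.ext (Prod.ext h1 (Option.some.inj h2)))
          | exact congrArg (fun z => Sum.inr (Sum.inr (Sum.inr (Sum.inl z))))
              (Subtype.ext (Prod.ext h1 (Option.some.inj h3)))
          | exact congrArg (fun z => Sum.inr (Sum.inr (Sum.inr (Sum.inr z))))
              (Subtype.ext (Prod.ext h1 (Prod.ext (Option.some.inj h2) (Option.some.inj h3))))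
          | (cases h2; done)
          | (cases h3; done)
          | (cases h4; done)
    · rintro ⟨M', hM'⟩
      obtain ⟨M, r, c, b, rfl, hr, hc, hb⟩ := exists_ext M' hM'.1
      have hppM : isPP M := isPP_of_ext hM'.1
      obtain ⟨hconnM, i0, hi0⟩ := (conn_ext hm).mp hM'.2.2
      have hpos : 0 < zeroRows M := pos_of_zr hi0
      have hzr' := hM'.2.1
      cases b with
      | true =>
        obtain ⟨rfl, rfl⟩ := hb rfl
        rw [zr_aa] at hzr'
        exact ⟨Sum.inl ⟨M, ⟨hppM, hzr', hconnM⟩, by omega⟩, Subtype.ext rfl⟩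
      | false =>
        cases r with
        | none =>
          cases c with
          | none =>
            rw [zr_bb] at hzr'
            exact ⟨Sum.inr (Sum.inl ⟨M, ⟨hppM, by omega, hconnM⟩, by omega⟩),
              Subtype.ext rfl⟩
          | some jc =>
            have hjc := hc jc rfl
            rw [zr_dd] at hzr'
            exact ⟨Sum.inr (Sum.inr (Sum.inr (Sum.inl ⟨(M, jc), ⟨hppM, hzr', hconnM⟩, hjc⟩))),
              Subtype.ext rfl⟩
        | some i =>
          have hi := hr i rfl
          cases c with
          | none =>
            rw [zr_cc hi] at hzr'
            exact ⟨Sum.inr (Sum.inr (Sum.inl ⟨(M, i), ⟨hppM, hzr', hconnM⟩, hi⟩)),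
              Subtype.ext rfl⟩
          | some jc =>
            have hjc := hc jc rfl
            rw [zr_ee hi] at hzr'
            exact ⟨Sum.inr (Sum.inr (Sum.inr (Sum.inr
              ⟨(M, i, jc), ⟨hppM, show zeroRows M = j + 1 by omega, hconnM⟩, hi, hjc⟩))),
              Subtype.ext rfl⟩
  have h0 := (Nat.card_eq_of_bijective F hbij).symm
  rw [show N (m+1) j = Nat.card {M' : Mat (m+1) // P j M'} from rfl, h0]
  rw [Nat.card_sum, Nat.card_sum, Nat.card_sum, Nat.card_sum]
  rw [card_P_and j (1 ≤ j), card_P_and (j-1) (2 ≤ j), card_pair_r j, card_pair_c j,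
    card_trip (j+1)]
  ring

lemma zeroRows_le (M : Mat m) : zeroRows M ≤ m := by
  unfold zeroRows
  calc (univ.filter (fun i : Fin m => ∀ j, M i j = false)).card
      ≤ (univ : Finset (Fin m)).card := Finset.card_filter_le _ _
    _ = m := by simp

lemma base1 : N 1 1 = 1 := by
  have hP : P 1 (fun _ _ => false : Mat 1) := by
    unfold P isPP
    refine ⟨⟨?_, ?_⟩, ?_, ?_⟩
    · intro i j j' h; exact absurd h (by simp)
    · intro i i' j h; exact absurd h (by simp)
    · unfold zeroRows
      rw [Finset.filter_true_of_mem (fun i _ => fun j => rfl)]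
      simp
    · intro i h1 h2; omega
  haveI : Unique {M : Mat 1 // P 1 M} :=
    { default := ⟨fun _ _ => false, hP⟩
      uniq := by
        rintro ⟨M, hM⟩
        apply Subtype.ext
        funext i j
        obtain ⟨i0, hi0⟩ := exists_zr_of_pos (M := M) (by rw [hM.2.1]; omega)
        have hii : i = i0 := Subsingleton.elim i i0
        rw [hii]
        exact hi0 j }
  exact Nat.card_unique

lemma base2 (j : ℕ) : N 1 (j+2) = 0 := by
  haveI : IsEmpty {M : Mat 1 // P (j+2) M} := by
    refine ⟨fun x => ?_⟩
    have h1 := zeroRows_le x.1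
    have h2 := x.2.2.1
    omega
  exact Nat.card_of_isEmpty



end StmtAux

theorem stmt12 (a : ℕ → ℕ → ℕ) (h00 : a 0 0 = 1) (h0k : ∀ k, 0 < k → a 0 k = 0)
    (hrec : ∀ n k, a (n+1) k =
      (if k = 0 then 0 else a n (k-1)) + (2*k+3) * a n k + (k+2)^2 * a n (k+1)) :
    (∀ n k, a n k = Nat.card {M : Fin (n+1) → Fin (n+1) → Bool //
        PP.isPP M ∧ PP.zeroRows M = k+1 ∧ PP.Conn M}) ∧
    (∀ n, a n 0 = Nat.card {M : Fin (n+2) → Fin (n+2) → Bool //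
        PP.isPP M ∧ PP.zeroRows M = 0 ∧ PP.Conn M}) := by
  have key : ∀ n k, a n k = StmtAux.N (n+1) (k+1) := by
    intro n
    induction n with
    | zero =>
      intro k
      cases k with
      | zero => rw [h00, StmtAux.base1]
      | succ k =>
        rw [h0k (k+1) (Nat.succ_pos k), StmtAux.base2 k]
    | succ n ih =>
      intro k
      cases k with
      | zero =>
        have hmaster := StmtAux.master (m := n+1) (Nat.succ_pos n) 1
        have h := hrec n 0
        rw [if_pos rfl] at h
        norm_num at h hmaster ⊢
        rw [h, ih 0, ih 1, hmaster]
        ring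
      | succ k =>
        have hmaster := StmtAux.master (m := n+1) (Nat.succ_pos n) (k+2)
        have h := hrec n (k+1)
        rw [if_neg (Nat.succ_ne_zero k)] at h
        have hif1 : (if 1 ≤ k+2 then StmtAux.N (n+1) (k+2) else 0) = StmtAux.N (n+1) (k+2) :=
          if_pos (by omega)
        have hif2 : (if 2 ≤ k+2 then StmtAux.N (n+1) (k+2-1) else 0)
            = StmtAux.N (n+1) (k+1) := by
          rw [if_pos (by omega)]
          rfl
        rw [hif1, hif2] at hmaster
        have hs : k + 1 + 1 = k + 2 := rfl
        rw [h, ih (k+1), ih (k+2), show k+1-1 = k from rfl, ih k, hs, hmaster]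
        ring
  refine ⟨fun n k => key n k, fun n => ?_⟩
  have h0 := StmtAux.master (m := n+1) (Nat.succ_pos n) 0
  norm_num at h0
  exact (key n 0).trans h0.symm
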